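/- arXiv:1702.02408 — 2 statements merged into one kernel-verified Lean document; each statement's English description precedes it below -/
import Mathlib

section
/- Let x ∈ W_af and let m₀ ≥ 0 be such that ℓ(x t_{−2mρ∨}) = −ℓ∞(x t_{−2mρ∨}) for all m ≥ m₀ (such m₀ exists). Then for every m ≥ 0, ℓ(x t_{−2(m₀+m)ρ∨}) = ℓ(x t_{−2m₀ρ∨}) + m · ℓ(t_{−2ρ∨}), and ℓ(t_{−2mρ∨}) = m · ℓ(t_{−2ρ∨}). -/
open scoped Classical

/-- The data of a finite crystallographic root system (simple roots `α`, simple coroots `αv`,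
positive roots `Δpos`, Weyl group `W` acting on the root/weight lattice `P` and on the
coroot lattice `Qv`, highest root `θ`), from which the affine Weyl group
`W_af = W ⋉ Q∨` and its Iwahori–Matsumoto length function are constructed below. -/
structure AffineRootSetup where
  /-- index set of the simple roots -/
  I : Type
  [fintypeI : Fintype I]
  /-- the lattice containing the roots (root/weight lattice) -/
  P : Type
  [acgP : AddCommGroup P]
  /-- the coroot lattice `Q∨` -/
  Qv : Type
  [acgQv : AddCommGroup Qv]
  /-- the pairing `⟨·,·⟩ : P × Q∨ → ℤ` -/
  pair : P →+ Qv →+ ℤ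
  /-- simple roots -/
  α : I → P
  /-- simple coroots -/
  αv : I → Qv
  pair_simple : ∀ i, pair (α i) (αv i) = 2
  /-- the finite Weyl group -/
  W : Type
  [groupW : Group W]
  [fintypeW : Fintype W]
  /-- action of `W` on the root lattice -/
  σP : W →* Multiplicative (AddAut P)
  /-- action of `W` on the coroot lattice -/
  σQv : W →* Multiplicative (AddAut Qv)
  pair_invariant : ∀ (w : W) (β : P) (ξ : Qv), pair (σP w β) (σQv w ξ) = pair β ξ
  /-- simple reflections -/
  s : I → W
  s_act : ∀ (i : I) (β : P), σP (s i) β = β - pair β (αv i) • α i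
  s_act_v : ∀ (i : I) (ξ : Qv), σQv (s i) ξ = ξ - pair (α i) ξ • αv i
  sgen : Subgroup.closure (Set.range s) = ⊤
  /-- the set of positive roots -/
  Δpos : Finset P
  simple_mem : ∀ i, α i ∈ Δpos
  pos_decomp : ∀ β ∈ Δpos, β ∈ AddSubmonoid.closure (Set.range α)
  neg_not_pos : ∀ β ∈ Δpos, -β ∉ Δpos
  root_stable : ∀ (w : W), ∀ β ∈ Δpos, σP w β ∈ Δpos ∨ -(σP w β) ∈ Δpos
  /-- the coroot `β∨` of a root `β` -/
  coroot : P → Qv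
  coroot_simple : ∀ i, coroot (α i) = αv i
  coroot_equivariant : ∀ (w : W) (β : P), coroot (σP w β) = σQv w (coroot β)
  coroot_neg : ∀ β : P, coroot (-β) = -coroot β
  /-- the highest root -/
  θ : P
  θ_mem : θ ∈ Δpos
  /-- the reflection in the highest root -/
  sθ : W
  sθ_act : ∀ β : P, σP sθ β = β - pair β (coroot θ) • θ

namespace AffineRootSetup

attribute [instance] fintypeI acgP acgQv groupW fintypeW

variable (R : AffineRootSetup)

/-- `W` acting on `Multiplicative Q∨`. -/
def phi : R.W →* MulAut (Multiplicative R.Qv) where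
  toFun w := AddEquiv.toMultiplicative (R.σQv w)
  map_one' := by ext x; rw [map_one]; rfl
  map_mul' w v := by ext x; rw [map_mul]; rfl

/-- The affine Weyl group `W_af = W ⋉ Q∨`, realized as a semidirect product. -/
abbrev Waf := Multiplicative R.Qv ⋊[R.phi] R.W

/-- the translation `t_ξ ∈ W_af` for `ξ ∈ Q∨` -/
def t (ξ : R.Qv) : R.Waf := SemidirectProduct.inl (Multiplicative.ofAdd ξ)

/-- the inclusion `W ⊆ W_af` -/
def j (w : R.W) : R.Waf := SemidirectProduct.inr w

/-- the `W`-component `w` in the normal form `x = w t_ξ` -/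
def wpart (x : R.Waf) : R.W := x.right

/-- the translation component `ξ` in the normal form `x = w t_ξ` -/
def ξpart (x : R.Waf) : R.Qv := R.σQv x.right⁻¹ (Multiplicative.toAdd x.left)

/-- The Iwahori–Matsumoto length function on the affine Weyl group:
`ℓ(w t_ξ) = ∑_{β ∈ Δ⁺} |⟨β, ξ⟩ + χ(w β ∈ Δ⁻)|`; it coincides with the Coxeter length of
`W_af` as a Coxeter group with simple reflections `s_0, s_1, …, s_n`, and restricts on `W`
to the length function of the finite Weyl group. -/
noncomputable def len (x : R.Waf) : ℕ :=
  ∑ β ∈ R.Δpos,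
    (R.pair β (R.ξpart x) + (if R.σP (R.wpart x) β ∈ R.Δpos then 0 else 1)).natAbs

/-- The semi-infinite length `ℓ∞(w t_ξ) = ℓ(w) + 2⟨ρ, ξ⟩`,
where `2⟨ρ, ξ⟩ = ∑_{β ∈ Δ⁺} ⟨β, ξ⟩`. -/
noncomputable def slen (x : R.Waf) : ℤ :=
  (R.len (R.j (R.wpart x)) : ℤ) + ∑ β ∈ R.Δpos, R.pair β (R.ξpart x)

/-- `2ρ∨`, the sum of the positive coroots. -/
def tworhov : R.Qv := ∑ β ∈ R.Δpos, R.coroot β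

/-- The set of affine simple reflections `{s_i : i ∈ I} ∪ {s_0}`,
where `s_0 = s_θ t_{−θ∨}`. -/
def Saf : Set R.Waf :=
  Set.range (fun i => R.j (R.s i)) ∪ {R.j R.sθ * R.t (-(R.coroot R.θ))}

end AffineRootSetup

namespace AffineRootSetup

variable (R : AffineRootSetup)

lemma wpart_mul_t (x : R.Waf) (ζ : R.Qv) : R.wpart (x * R.t ζ) = R.wpart x := by
  simp [wpart, t]

lemma phi_apply (w : R.W) (ζ : R.Qv) :
    R.phi w (Multiplicative.ofAdd ζ) = Multiplicative.ofAdd (R.σQv w ζ) := rfl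

lemma ξpart_mul_t (x : R.Waf) (ζ : R.Qv) :
    R.ξpart (x * R.t ζ) = R.ξpart x + ζ := by
  show R.σQv (x * R.t ζ).right⁻¹ (Multiplicative.toAdd (x * R.t ζ).left) = _
  simp only [SemidirectProduct.mul_right, SemidirectProduct.mul_left, t,
    SemidirectProduct.left_inl, SemidirectProduct.right_inl, mul_one, phi_apply,
    toAdd_mul, toAdd_ofAdd, map_add]
  congr 1
  have : R.σQv x.right⁻¹ (R.σQv x.right ζ) = R.σQv (x.right⁻¹ * x.right) ζ := by
    rw [map_mul]; rfl
  rw [this, inv_mul_cancel, map_one]; rfl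

lemma ξpart_t (ζ : R.Qv) : R.ξpart (R.t ζ) = ζ := by
  show R.σQv (R.t ζ).right⁻¹ (Multiplicative.toAdd (R.t ζ).left) = ζ
  simp [t]

lemma wpart_t (ζ : R.Qv) : R.wpart (R.t ζ) = 1 := rfl

lemma len_t (ζ : R.Qv) : R.len (R.t ζ) = ∑ β ∈ R.Δpos, (R.pair β ζ).natAbs := by
  unfold len
  rw [ξpart_t, wpart_t]
  refine Finset.sum_congr rfl fun β hβ => ?_
  rw [if_pos, add_zero]
  simpa using hβ

end AffineRootSetup

namespace AffineRootSetup

lemma len_mul_t (R : AffineRootSetup) (x : R.Waf) (ζ : R.Qv) :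
    R.len (x * R.t ζ) = ∑ β ∈ R.Δpos,
      ((R.pair β (R.ξpart x) + (if R.σP (R.wpart x) β ∈ R.Δpos then 0 else 1))
        + R.pair β ζ).natAbs := by
  unfold len
  rw [R.wpart_mul_t, R.ξpart_mul_t]
  refine Finset.sum_congr rfl fun β _ => ?_
  rw [map_add]; ring_nf

lemma slen_mul_t (R : AffineRootSetup) (x : R.Waf) (ζ : R.Qv) :
    R.slen (x * R.t ζ) = (R.len (R.j (R.wpart x)) : ℤ)
      + ∑ β ∈ R.Δpos, (R.pair β (R.ξpart x) + R.pair β ζ) := by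
  unfold slen
  rw [R.wpart_mul_t, R.ξpart_mul_t]
  congr 1
  refine Finset.sum_congr rfl fun β _ => ?_
  rw [map_add]

end AffineRootSetup

/-- arithmetic key lemma: if `∑ |c - m d|` is eventually affine with slope `D = ∑ d`,
then `D = ∑ |d|`. -/
lemma slope_eq_abs {ι : Type*} (s : Finset ι) (c d : ι → ℤ) (C : ℤ) (m₀ : ℕ)
    (h : ∀ m : ℕ, m₀ ≤ m →
      ((∑ β ∈ s, (c β - m * d β).natAbs : ℕ) : ℤ) = C + m * ∑ β ∈ s, d β) :
    ∑ β ∈ s, d β = ∑ β ∈ s, ((d β).natAbs : ℤ) := by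
  set D : ℤ := ∑ β ∈ s, d β with hD
  set T : ℤ := ∑ β ∈ s, ((d β).natAbs : ℤ) with hT
  set K : ℤ := ∑ β ∈ s, ((c β).natAbs : ℤ) with hK
  have hDT : D ≤ T := Finset.sum_le_sum fun β _ => Int.le_natAbs
  have hTD : T ≤ D := by
    by_contra hlt
    push_neg at hlt
    have h1 : (1 : ℤ) ≤ T - D := by omega
    -- lower bound: for all m ≥ m₀, m*T - K ≤ C + m*D
    have hbound : ∀ m : ℕ, m₀ ≤ m → (m : ℤ) * T - K ≤ C + m * D := by
      intro m hm
      rw [← h m hm]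
      have : (m : ℤ) * T - K = ∑ β ∈ s, ((m : ℤ) * ((d β).natAbs : ℤ) - ((c β).natAbs : ℤ)) := by
        rw [Finset.sum_sub_distrib, ← Finset.mul_sum, hT, hK]
      rw [this, Nat.cast_sum]
      refine Finset.sum_le_sum fun β _ => ?_
      rw [Int.natCast_natAbs, Int.natCast_natAbs, Int.natCast_natAbs]
      have h2 : |(m : ℤ) * d β| ≤ |c β - m * d β| + |c β| := by
        calc |(m : ℤ) * d β| = |(m * d β - c β) + c β| := by ring_nf
          _ ≤ |m * d β - c β| + |c β| := abs_add_le _ _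
          _ = |c β - m * d β| + |c β| := by rw [abs_sub_comm]
      have h3 : |(m : ℤ)| * |d β| = |(m : ℤ) * d β| := (abs_mul _ _).symm
      have h4 : |(m : ℤ)| = (m : ℤ) := abs_of_nonneg (by positivity)
      nlinarith [abs_nonneg (d β)]
    set M : ℕ := max m₀ ((C + K).toNat + 1) with hM
    have h5 := hbound M (le_max_left _ _)
    have h6 : (M : ℤ) ≤ M * (T - D) := le_mul_of_one_le_right (by positivity) h1
    have h7 : (C + K) < (M : ℤ) := by
      have : ((C + K).toNat + 1 : ℕ) ≤ M := le_max_right _ _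
      omega
    have : (M : ℤ) * (T - D) ≤ C + K := by linarith
    linarith
  omega


/-- if `m₀ ≥ 0` is such that `ℓ(x t_{−2mρ∨}) = −ℓ∞(x t_{−2mρ∨})` for all
`m ≥ m₀`, then for every `m ≥ 0`,
`ℓ(x t_{−2(m₀+m)ρ∨}) = ℓ(x t_{−2m₀ρ∨}) + m·ℓ(t_{−2ρ∨})` and `ℓ(t_{−2mρ∨}) = m·ℓ(t_{−2ρ∨})`. -/
theorem statement4 (R : AffineRootSetup) (x : R.Waf) (m₀ : ℕ)
    (h : ∀ m : ℕ, m₀ ≤ m →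
      (R.len (x * R.t (-((m : ℤ) • R.tworhov))) : ℤ)
        = -R.slen (x * R.t (-((m : ℤ) • R.tworhov)))) :
    ∀ m : ℕ,
      R.len (x * R.t (-(((m₀ + m : ℕ) : ℤ) • R.tworhov)))
        = R.len (x * R.t (-((m₀ : ℤ) • R.tworhov))) + m * R.len (R.t (-R.tworhov)) ∧
      R.len (R.t (-((m : ℤ) • R.tworhov))) = m * R.len (R.t (-R.tworhov)) := by
  classical
  set d : R.P → ℤ := fun β => R.pair β R.tworhov with hd
  set c : R.P → ℤ := fun β =>
    R.pair β (R.ξpart x) + (if R.σP (R.wpart x) β ∈ R.Δpos then 0 else 1) with hc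
  have hpair : ∀ (k : ℤ) (β : R.P), R.pair β (-(k • R.tworhov)) = -(k * d β) := by
    intro k β; rw [map_neg, map_zsmul, smul_eq_mul, hd]
  have hlen : ∀ k : ℤ, (R.len (x * R.t (-(k • R.tworhov))) : ℤ)
      = ∑ β ∈ R.Δpos, ((c β - k * d β).natAbs : ℤ) := by
    intro k
    rw [R.len_mul_t, Nat.cast_sum]
    refine Finset.sum_congr rfl fun β _ => ?_
    congr 2
    rw [hpair, hc]
    ring
  have hslen : ∀ k : ℤ, R.slen (x * R.t (-(k • R.tworhov)))
      = (R.len (R.j (R.wpart x)) : ℤ)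
        + ∑ β ∈ R.Δpos, (R.pair β (R.ξpart x) - k * d β) := by
    intro k
    rw [R.slen_mul_t]
    congr 1
    exact Finset.sum_congr rfl fun β _ => by rw [hpair]; ring
  have hT : (R.len (R.t (-R.tworhov)) : ℤ) = ∑ β ∈ R.Δpos, ((d β).natAbs : ℤ) := by
    rw [R.len_t, Nat.cast_sum]
    exact Finset.sum_congr rfl fun β _ => by rw [map_neg, Int.natAbs_neg, hd]
  have h' : ∀ m : ℕ, m₀ ≤ m →
      ((∑ β ∈ R.Δpos, (c β - m * d β).natAbs : ℕ) : ℤ)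
        = (-((R.len (R.j (R.wpart x)) : ℤ) + ∑ β ∈ R.Δpos, R.pair β (R.ξpart x)))
          + m * ∑ β ∈ R.Δpos, d β := by
    intro m hm
    have e := h m hm
    rw [hlen m, hslen m] at e
    rw [Nat.cast_sum, e, Finset.sum_sub_distrib, ← Finset.mul_sum]
    ring
  have hDT : ∑ β ∈ R.Δpos, d β = ∑ β ∈ R.Δpos, ((d β).natAbs : ℤ) :=
    slope_eq_abs R.Δpos c d _ m₀ h'
  intro m
  constructor
  · have key : (R.len (x * R.t (-(((m₀ + m : ℕ) : ℤ) • R.tworhov))) : ℤ)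
        = (R.len (x * R.t (-((m₀ : ℤ) • R.tworhov))) : ℤ)
          + (m : ℤ) * (R.len (R.t (-R.tworhov)) : ℤ) := by
      rw [h (m₀ + m) (Nat.le_add_right _ _), h m₀ le_rfl, hslen, hslen, hT, ← hDT,
        Finset.sum_sub_distrib, Finset.sum_sub_distrib, ← Finset.mul_sum, ← Finset.mul_sum]
      push_cast
      ring
    exact_mod_cast key
  · rw [R.len_t, R.len_t, Finset.mul_sum]
    refine Finset.sum_congr rfl fun β _ => ?_
    rw [map_neg, map_neg, Int.natAbs_neg, Int.natAbs_neg, map_zsmul, smul_eq_mul,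
      Int.natAbs_mul, Int.natAbs_natCast]
end

section
/- Let D_i be the Demazure operator on ℤ[P] and T_i := D_i − 1. Then for every ν ∈ P, the operator identity T_i ∘ m_{e^ν} − m_{e^{s_iν}} ∘ T_i = m_{(e^{s_iν} − e^{ν})/(1 − e^{α_i})} holds on ℤ[P], where m_f denotes multiplication by f; in particular (e^{s_iν} − e^{ν})/(1 − e^{α_i}) lies in ℤ[P]. -/
/-- `e^μ`, the standard basis element of the group algebra `ℤ[P]` of a lattice `P`. -/
noncomputable def e {P : Type} [AddCommGroup P] (μ : P) : AddMonoidAlgebra ℤ P :=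
  AddMonoidAlgebra.single μ 1

section aux
variable {P : Type} [AddCommGroup P]

lemma e_mul (μ ν : P) : e μ * e ν = e (μ + ν) := by
  simp [e, AddMonoidAlgebra.single_mul_single]

lemma e_zero : e (0 : P) = 1 := rfl

lemma e_ne (a b : P) (h : a ≠ b) : e a ≠ e b := by
  intro he
  exact h (AddMonoidAlgebra.single_left_injective (R := ℤ) one_ne_zero he)

instance [Module.Free ℤ P] : UniqueSums P := by
  have b := Module.Free.chooseBasis ℤ P
  exact UniqueSums.of_injective_addHom b.repr.toLinearMap.toAddMonoidHom.toAddHom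
    b.repr.injective inferInstance

lemma geom (α : P) : ∀ (m : ℕ) (ν : P), ∃ g : AddMonoidAlgebra ℤ P,
    (1 - e α) * g = e (ν - m • α) - e ν := by
  intro m
  induction m with
  | zero => intro ν; exact ⟨0, by simp⟩
  | succ n ih =>
    intro ν
    obtain ⟨g, hg⟩ := ih (ν - α)
    refine ⟨g + e (ν - α), ?_⟩
    rw [mul_add, hg, sub_mul, one_mul, e_mul]
    have h1 : ν - α - n • α = ν - (n + 1 : ℕ) • α := by
      rw [add_smul, one_smul]; abel
    have h2 : α + (ν - α) = ν := by abel
    rw [h1, h2]; abel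

lemma geomZ (α : P) (n : ℤ) (ν : P) : ∃ g : AddMonoidAlgebra ℤ P,
    (1 - e α) * g = e (ν - n • α) - e ν := by
  rcases le_or_gt 0 n with h | h
  · obtain ⟨g, hg⟩ := geom α n.toNat ν
    refine ⟨g, ?_⟩
    rw [hg, ← natCast_zsmul, Int.toNat_of_nonneg h]
  · obtain ⟨g, hg⟩ := geom α (-n).toNat (ν - n • α)
    refine ⟨-g, ?_⟩
    have h2 : ν - n • α - ((-n).toNat : ℤ) • α = ν := by
      rw [Int.toNat_of_nonneg (by omega), neg_smul]; abel
    rw [← natCast_zsmul, h2] at hg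
    rw [mul_neg, hg]
    abel

end aux

variable {P : Type} [AddCommGroup P] [Module.Free ℤ P] in
example : NoZeroDivisors (AddMonoidAlgebra ℤ P) := inferInstance

/-- with `D_i` the Demazure operator on `ℤ[P]` and `T_i := D_i − 1`, for
every `ν ∈ P` the operator identity
`T_i ∘ m_{e^ν} − m_{e^{s_iν}} ∘ T_i = m_{(e^{s_iν} − e^{ν})/(1 − e^{α_i})}` holds on `ℤ[P]`;
in particular `(e^{s_iν} − e^{ν})/(1 − e^{α_i})` lies in `ℤ[P]`. -/
theorem statement12 {P : Type} [AddCommGroup P] [Module.Free ℤ P]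
    (α : P) (hα : α ≠ 0) (c : P →+ ℤ) (hc : c α = 2)
    (D : AddMonoidAlgebra ℤ P →ₗ[ℤ] AddMonoidAlgebra ℤ P)
    (hD : ∀ μ : P, (1 - e (-α)) * D (e μ) = e μ - e ((μ - c μ • α) - α)) :
    ∀ ν : P, ∃ g : AddMonoidAlgebra ℤ P,
      (1 - e α) * g = e (ν - c ν • α) - e ν ∧
      ∀ f : AddMonoidAlgebra ℤ P,
        (D (e ν * f) - e ν * f) - e (ν - c ν • α) * (D f - f) = g * f := by
  intro ν
  obtain ⟨g, hg⟩ := geomZ α (c ν) ν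
  have hu : (1 : AddMonoidAlgebra ℤ P) - e (-α) ≠ 0 := by
    rw [← e_zero, sub_ne_zero]
    exact e_ne 0 (-α) (by simpa using hα)
  have hug : (1 - e (-α)) * g = e (ν - α) - e (ν - c ν • α - α) := by
    have h := congrArg (fun x => e (-α) * x) hg
    simp only [← mul_assoc, mul_sub, mul_one, e_mul] at h
    have h1 : -α + α = (0 : P) := by abel
    rw [h1, e_zero] at h
    have : (1 - e (-α)) * g = -((e (-α) - 1) * g) := by ring
    rw [this, h]
    have h2 : -α + (ν - c ν • α) = ν - c ν • α - α := by abel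
    have h3 : -α + ν = ν - α := by abel
    rw [h2, h3]
    ring
  refine ⟨g, hg, ?_⟩
  have base : ∀ μ : P,
      (D (e ν * e μ) - e ν * e μ) - e (ν - c ν • α) * (D (e μ) - e μ) = g * e μ := by
    intro μ
    apply mul_left_cancel₀ hu
    have E1 : (1 - e (-α)) * D (e ν * e μ) =
        e (ν + μ) - e (ν + μ - c (ν + μ) • α - α) := by
      rw [e_mul]
      simpa using hD (ν + μ)
    have E2 := hD μ
    have expand : (1 - e (-α)) * ((D (e ν * e μ) - e ν * e μ)
          - e (ν - c ν • α) * (D (e μ) - e μ)) =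
        ((1 - e (-α)) * D (e ν * e μ)) - (1 - e (-α)) * (e ν * e μ)
          - e (ν - c ν • α) * ((1 - e (-α)) * D (e μ))
          + e (ν - c ν • α) * ((1 - e (-α)) * e μ) := by ring
    rw [expand, E1, E2, show (1 - e (-α)) * (g * e μ) = ((1 - e (-α)) * g) * e μ by ring,
      hug]
    have hexp : ν - c ν • α + (μ - c μ • α - α) = ν + μ - c (ν + μ) • α - α := by
      rw [map_add, add_smul]; abel
    simp only [sub_mul, mul_sub, one_mul, e_mul, mul_one]
    rw [hexp]
    have h1 : -α + (ν + μ) = ν - α + μ := by abel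
    have h2 : ν - c ν • α + (-α + μ) = ν - c ν • α - α + μ := by abel
    rw [h1, h2]
    abel
  intro f
  induction f using AddMonoidAlgebra.induction_linear with
  | zero => simp
  | add f1 f2 h1 h2 =>
    simp only [mul_add, map_add]
    linear_combination h1 + h2
  | single μ b =>
    have hs : (AddMonoidAlgebra.single μ b : AddMonoidAlgebra ℤ P) = b • e μ := by
      rw [e]
      rw [AddMonoidAlgebra.smul_single, smul_eq_mul, mul_one]
    rw [hs, mul_smul_comm, map_smul, map_smul,
      ← smul_sub b (D (e μ)) (e μ), mul_smul_comm, ← smul_sub, ← smul_sub, base μ, mul_smul_comm]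
end
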